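/- Soundness and completeness for CMABs: A formula φ ∈ L is derivable in the logic LDA if and only if φ is valid for the class of consistent multi-agent belief models (CMABs), i.e., (B,Cxt) ⊨ φ for every CMAB (B,Cxt). -/

import Mathlib

namespace LDAPaper

/-- Formulas over atomic propositions `ℕ` and agents `Agt`.
`expbel i α` is the explicit belief operator `△ᵢ α`; `impbel i φ` is the implicit
belief operator `□ᵢ φ`. -/
inductive Frm (Agt : Type) : Type
  | atom : ℕ → Frm Agt
  | neg : Frm Agt → Frm Agt
  | and : Frm Agt → Frm Agt → Frm Agt
  | expbel : Agt → Frm Agt → Frm Agt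
  | impbel : Agt → Frm Agt → Frm Agt

namespace Frm

variable {Agt : Type}

/-- Membership in the sublanguage `L0` (no implicit-belief operator). -/
def isL0 : Frm Agt → Prop
  | atom _ => True
  | neg α => isL0 α
  | and α β => isL0 α ∧ isL0 β
  | expbel _ α => isL0 α
  | impbel _ _ => False

/-- Membership in the language `L`: the explicit belief operator applies only to
`L0`-formulas. -/
def isL : Frm Agt → Prop
  | atom _ => True
  | neg φ => isL φ
  | and φ ψ => isL φ ∧ isL ψ
  | expbel _ α => isL0 α
  | impbel _ φ => isL φ

/-- Material implication, defined from `¬` and `∧` as usual. -/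
def imp (φ ψ : Frm Agt) : Frm Agt := neg (and φ (neg ψ))

/-- Disjunction, defined from `¬` and `∧` as usual. -/
def or (φ ψ : Frm Agt) : Frm Agt := neg (and (neg φ) (neg ψ))

/-- Biconditional, defined from `¬` and `∧` as usual. -/
def iff (φ ψ : Frm Agt) : Frm Agt := and (imp φ ψ) (imp ψ φ)

/-- The set of atomic propositions occurring in a formula. -/
def atomsOf : Frm Agt → Set ℕ
  | atom p => {p}
  | neg φ => atomsOf φ
  | and φ ψ => atomsOf φ ∪ atomsOf ψ
  | expbel _ φ => atomsOf φ
  | impbel _ φ => atomsOf φ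

end Frm

/-- A model `(W, D, N, V)`: worlds, doxastic function, notional function, valuation. -/
structure PreNDM (Agt : Type) where
  W : Type
  D : Agt → W → Set (Frm Agt)
  N : Agt → W → Set W
  V : ℕ → Set W

namespace PreNDM

variable {Agt : Type}

/-- Truth of a formula at a world of a model. -/
def sat (M : PreNDM Agt) : M.W → Frm Agt → Prop
  | w, .atom p => w ∈ M.V p
  | w, .neg φ => ¬ sat M w φ
  | w, .and φ ψ => sat M w φ ∧ sat M w ψ
  | w, .expbel i α => α ∈ M.D i w
  | w, .impbel i φ => ∀ v ∈ M.N i w, sat M v φ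

end PreNDM

/-- Quasi-notional doxastic model: belief bases consist of `L0`-formulas,
(C1*) `N(i,w) ⊆ ∩_{α ∈ D(i,w)} ‖α‖`, and (C2) `N(i,w) ≠ ∅`. -/
def isQNDM {Agt : Type} (M : PreNDM Agt) : Prop :=
  (∀ i w, ∀ α ∈ M.D i w, α.isL0) ∧
  (∀ i w, ∀ v ∈ M.N i w, ∀ α ∈ M.D i w, M.sat v α) ∧
  (∀ i w, (M.N i w).Nonempty)

/-- Notional doxastic model: belief bases consist of `L0`-formulas,
(C1) `N(i,w) = ∩_{α ∈ D(i,w)} ‖α‖`, and (C2) `N(i,w) ≠ ∅`. -/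
def isNDM {Agt : Type} (M : PreNDM Agt) : Prop :=
  (∀ i w, ∀ α ∈ M.D i w, α.isL0) ∧
  (∀ i w, M.N i w = {v | ∀ α ∈ M.D i w, M.sat v α}) ∧
  (∀ i w, (M.N i w).Nonempty)

/-- A model is finite iff `W` is finite and every `D(i,w)` and every
`{p ∈ Atm : w ∈ V(p)}` is finite. -/
def finiteModel {Agt : Type} (M : PreNDM Agt) : Prop :=
  Finite M.W ∧ (∀ i w, (M.D i w).Finite) ∧ (∀ w, {p : ℕ | w ∈ M.V p}.Finite)

end LDAPaper
namespace LDAPaper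

/-- A multi-agent belief base `B = (B_1,…,B_n, V)`. -/
structure MABase (Agt : Type) where
  B : Agt → Set (Frm Agt)
  V : Set ℕ

namespace MABase

variable {Agt : Type}

/-- Satisfaction of `L0`-formulas by a multi-agent belief base. -/
def bsat (b : MABase Agt) : Frm Agt → Prop
  | .atom p => p ∈ b.V
  | .neg α => ¬ bsat b α
  | .and α β => bsat b α ∧ bsat b β
  | .expbel i α => α ∈ b.B i
  | .impbel _ _ => True

/-- Well-formedness: each agent's belief base consists of `L0`-formulas. -/
def wf (b : MABase Agt) : Prop := ∀ i, ∀ α ∈ b.B i, α.isL0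

/-- Doxastic alternative relation: `b R_i b'` iff `b'` satisfies every formula in
agent `i`'s belief base in `b`. -/
def R (i : Agt) (b b' : MABase Agt) : Prop := ∀ α ∈ b.B i, bsat b' α

end MABase

/-- Satisfaction of `L`-formulas by a multi-agent belief model `(b, Cxt)`. -/
def msat {Agt : Type} (Cxt : Set (MABase Agt)) : MABase Agt → Frm Agt → Prop
  | b, .atom p => p ∈ b.V
  | b, .neg φ => ¬ msat Cxt b φ
  | b, .and φ ψ => msat Cxt b φ ∧ msat Cxt b ψ
  | b, .expbel i α => α ∈ b.B i
  | b, .impbel i φ => ∀ b' ∈ Cxt, MABase.R i b b' → msat Cxt b' φ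

/-- Consistent multi-agent belief model: all bases involved are well formed and
for every agent `i` and every `b' ∈ Cxt ∪ {b}` there is `b'' ∈ Cxt` with `b' R_i b''`. -/
def isCMAB {Agt : Type} (b : MABase Agt) (Cxt : Set (MABase Agt)) : Prop :=
  (∀ b' ∈ insert b Cxt, b'.wf) ∧
  (∀ i : Agt, ∀ b' ∈ insert b Cxt, ∃ b'' ∈ Cxt, MABase.R i b' b'')

/-- Boolean evaluation of a formula, treating atoms, explicit-belief formulas and
implicit-belief formulas as propositional atoms. -/
def boolEval {Agt : Type} (v : Frm Agt → Bool) : Frm Agt → Bool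
  | .neg φ => ! boolEval v φ
  | .and φ ψ => boolEval v φ && boolEval v ψ
  | φ => v φ

/-- Instances of classical propositional tautologies. -/
def Tautology {Agt : Type} (φ : Frm Agt) : Prop :=
  ∀ v : Frm Agt → Bool, boolEval v φ = true

/-- Derivability in the logic LDA: classical propositional logic over `L` plus
axioms K, D, Int and the necessitation rule for implicit belief. -/
inductive LDA {Agt : Type} : Frm Agt → Prop
  | taut {φ : Frm Agt} : φ.isL → Tautology φ → LDA φ
  | axK (i : Agt) {φ ψ : Frm Agt} : φ.isL → ψ.isL →
      LDA (((Frm.impbel i φ).and (Frm.impbel i (φ.imp ψ))).imp (Frm.impbel i ψ))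
  | axD (i : Agt) {φ : Frm Agt} : φ.isL →
      LDA (Frm.neg ((Frm.impbel i φ).and (Frm.impbel i (Frm.neg φ))))
  | axInt (i : Agt) {α : Frm Agt} : α.isL0 →
      LDA ((Frm.expbel i α).imp (Frm.impbel i α))
  | mp {φ ψ : Frm Agt} : LDA (φ.imp ψ) → LDA φ → LDA ψ
  | nec (i : Agt) {φ : Frm Agt} : LDA φ → LDA (Frm.impbel i φ)

/-- Conjunction of a list of formulas (the empty conjunction is a tautology). -/
def conjList {Agt : Type} : List (Frm Agt) → Frm Agt
  | [] => Frm.neg ((Frm.atom 0).and (Frm.neg (Frm.atom 0)))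
  | φ :: l => φ.and (conjList l)

/-- A set of formulas is LDA-consistent iff no contradiction is derivable in LDA
from finitely many of its members. -/
def Consistent {Agt : Type} (Δ : Set (Frm Agt)) : Prop :=
  ∀ l : List (Frm Agt), (∀ ψ ∈ l, ψ ∈ Δ) → ¬ LDA (Frm.neg (conjList l))

/-- Maximally LDA-consistent set of `L`-formulas. -/
def MCS {Agt : Type} (Γ : Set (Frm Agt)) : Prop :=
  (∀ φ ∈ Γ, φ.isL) ∧ Consistent Γ ∧
    ∀ Δ : Set (Frm Agt), (∀ φ ∈ Δ, φ.isL) → Consistent Δ → Γ ⊆ Δ → Δ = Γ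

/-- Canonical doxastic function: `α ∈ D^c(i,w)` iff `△ᵢα ∈ w`. -/
def canonD {Agt : Type} (i : Agt) (w : {Γ : Set (Frm Agt) // MCS Γ}) : Set (Frm Agt) :=
  {α | Frm.expbel i α ∈ w.val}

/-- Canonical notional function: `v ∈ N^c(i,w)` iff `□ᵢφ ∈ w` implies `φ ∈ v`. -/
def canonN {Agt : Type} (i : Agt) (w : {Γ : Set (Frm Agt) // MCS Γ}) :
    Set {Γ : Set (Frm Agt) // MCS Γ} :=
  {v | ∀ φ : Frm Agt, Frm.impbel i φ ∈ w.val → φ ∈ v.val}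

/-- Canonical valuation: `w ∈ V^c(p)` iff `p ∈ w`. -/
def canonV {Agt : Type} (p : ℕ) : Set {Γ : Set (Frm Agt) // MCS Γ} :=
  {w | Frm.atom p ∈ w.val}

/-- The canonical model of LDA: worlds are the maximally LDA-consistent sets. -/
def canonM (Agt : Type) : PreNDM Agt where
  W := {Γ : Set (Frm Agt) // MCS Γ}
  D := canonD
  N := canonN
  V := canonV

/-- `w ≡_Σ v` iff `w` and `v` satisfy the same formulas of `Σ`. -/
def filtRel {Agt : Type} (M : PreNDM Agt) (S : Set (Frm Agt)) (w v : M.W) : Prop :=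
  ∀ φ ∈ S, (M.sat w φ ↔ M.sat v φ)

/-- The setoid of `≡_Σ`-equivalent worlds. -/
def filtSetoid {Agt : Type} (M : PreNDM Agt) (S : Set (Frm Agt)) : Setoid M.W where
  r := filtRel M S
  iseqv := ⟨fun _ _ _ => Iff.rfl, fun h φ hφ => (h φ hφ).symm,
    fun h1 h2 φ hφ => (h1 φ hφ).trans (h2 φ hφ)⟩

/-- The `≡_Σ`-equivalence class `|w|_Σ` of a world `w`. -/
def filtMk {Agt : Type} (M : PreNDM Agt) (S : Set (Frm Agt)) (w : M.W) :
    Quotient (filtSetoid M S) :=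
  Quotient.mk (filtSetoid M S) w

/-- Closure under subformulas. -/
def SubClosed {Agt : Type} (S : Set (Frm Agt)) : Prop :=
  (∀ φ : Frm Agt, Frm.neg φ ∈ S → φ ∈ S) ∧
  (∀ φ ψ : Frm Agt, Frm.and φ ψ ∈ S → φ ∈ S ∧ ψ ∈ S) ∧
  (∀ (i : Agt) (φ : Frm Agt), Frm.expbel i φ ∈ S → φ ∈ S) ∧
  (∀ (i : Agt) (φ : Frm Agt), Frm.impbel i φ ∈ S → φ ∈ S)

/-- The filtration `M_Σ = (W_Σ, D_Σ, N_Σ, V_Σ)` of `M` through `Σ`: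
`W_Σ` is the quotient of `W` by `≡_Σ`;
`D_Σ(i,|w|) = (∩_{v ∈ |w|} D(i,v)) ∩ Σ`;
`N_Σ(i,|w|) = {|v| : v ∈ N(i,w)}` (smallest filtration);
`V_Σ(p) = {|w| : (M,w) ⊨ p}` if `p` occurs in `Σ`, and `∅` otherwise. -/
def filtModel {Agt : Type} (M : PreNDM Agt) (S : Set (Frm Agt)) : PreNDM Agt where
  W := Quotient (filtSetoid M S)
  D := fun i x => {α | α ∈ S ∧ ∀ v : M.W, filtMk M S v = x → α ∈ M.D i v}
  N := fun i x => {y | ∃ w v : M.W, filtMk M S w = x ∧ filtMk M S v = y ∧ v ∈ M.N i w}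
  V := fun p =>
    {x | (∃ φ ∈ S, p ∈ φ.atomsOf) ∧ ∃ w : M.W, filtMk M S w = x ∧ M.sat w (Frm.atom p)}

/-- The language of Fagin & Halpern's logic of general awareness:
`bel` is implicit belief `B_i`, `aware` is awareness `A_i`, `expk` is explicit
belief `X_i`. -/
inductive LGA (Agt : Type) : Type
  | atom : ℕ → LGA Agt
  | neg : LGA Agt → LGA Agt
  | and : LGA Agt → LGA Agt → LGA Agt
  | bel : Agt → LGA Agt → LGA Agt
  | aware : Agt → LGA Agt → LGA Agt
  | expk : Agt → LGA Agt → LGA Agt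

/-- An awareness structure `(S, R_1,…,R_n, A_1,…,A_n, π)`. -/
structure AwStruct (Agt : Type) where
  S : Type
  R : Agt → S → S → Prop
  A : Agt → S → Set (LGA Agt)
  val : ℕ → Set S

namespace AwStruct

variable {Agt : Type}

/-- Truth in an awareness structure; `X_i φ` holds iff both `B_i φ` and `A_i φ` hold. -/
def sat (M : AwStruct Agt) : M.S → LGA Agt → Prop
  | s, .atom p => s ∈ M.val p
  | s, .neg φ => ¬ sat M s φ
  | s, .and φ ψ => sat M s φ ∧ sat M s ψ
  | s, .bel i φ => ∀ t, M.R i s t → sat M t φ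
  | s, .aware i φ => φ ∈ M.A i s
  | s, .expk i φ => (∀ t, M.R i s t → sat M t φ) ∧ φ ∈ M.A i s

/-- An awareness structure is serial iff every `R_i` is serial. -/
def serial (M : AwStruct Agt) : Prop := ∀ i s, ∃ t, M.R i s t

end AwStruct

/-- The translation `tr` from `L` to the language of general awareness. -/
def tr {Agt : Type} : Frm Agt → LGA Agt
  | .atom p => .atom p
  | .neg φ => .neg (tr φ)
  | .and φ ψ => .and (tr φ) (tr ψ)
  | .expbel i α => .expk i (tr α)
  | .impbel i φ => .bel i (tr φ)

end LDAPaper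

namespace LDAPaper

/-! ### Toolkit -/

section Toolkit

variable {Agt : Type}

theorem isL_of_isL0 : ∀ {α : Frm Agt}, α.isL0 → α.isL
  | .atom _, _ => trivial
  | .neg α, h => isL_of_isL0 (α := α) h
  | .and α β, h => ⟨isL_of_isL0 h.1, isL_of_isL0 h.2⟩
  | .expbel _ _, h => h
  | .impbel _ _, h => h.elim

theorem isL_imp {φ ψ : Frm Agt} (h1 : φ.isL) (h2 : ψ.isL) : (φ.imp ψ).isL := ⟨h1, h2⟩

theorem isL_imp_iff {φ ψ : Frm Agt} : (φ.imp ψ).isL ↔ φ.isL ∧ ψ.isL := Iff.rfl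

theorem LDA.isL : ∀ {φ : Frm Agt}, LDA φ → φ.isL := by
  intro φ h
  induction h with
  | taut h _ => exact h
  | axK i hφ hψ => exact ⟨⟨hφ, hφ, hψ⟩, hψ⟩
  | axD i hφ => exact ⟨hφ, hφ⟩
  | axInt i hα =>
    simp only [Frm.imp, Frm.isL]
    exact ⟨hα, isL_of_isL0 hα⟩
  | mp _ _ ih1 _ => exact ih1.2
  | nec i _ ih => exact ih

theorem boolEval_imp {v : Frm Agt → Bool} {φ ψ : Frm Agt} :
    boolEval v (φ.imp ψ) = (!(boolEval v φ) || boolEval v ψ) := by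
  simp only [Frm.imp, boolEval]
  cases boolEval v φ <;> cases boolEval v ψ <;> rfl

theorem LDA_syl {φ ψ χ : Frm Agt} (h1 : LDA (φ.imp ψ)) (h2 : LDA (ψ.imp χ)) :
    LDA (φ.imp χ) := by
  have a1 : (φ.imp ψ).isL := h1.isL
  have a2 : (ψ.imp χ).isL := h2.isL
  refine LDA.mp (LDA.mp (LDA.taut ?_ ?_) h1) h2
  · exact isL_imp a1 (isL_imp a2 (isL_imp a1.1 a2.2))
  · intro v
    simp only [boolEval_imp]
    cases boolEval v φ <;> cases boolEval v ψ <;> cases boolEval v χ <;> rfl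

theorem LDA_imp_of {φ ψ : Frm Agt} (h : LDA ψ) (hφ : φ.isL) : LDA (φ.imp ψ) := by
  refine LDA.mp (LDA.taut (isL_imp h.isL (isL_imp hφ h.isL)) ?_) h
  intro v
  simp only [boolEval_imp]
  cases boolEval v φ <;> cases boolEval v ψ <;> rfl

theorem LDA_imp_and {φ ψ χ : Frm Agt} (h1 : LDA (φ.imp ψ)) (h2 : LDA (φ.imp χ)) :
    LDA (φ.imp (ψ.and χ)) := by
  have a1 : (φ.imp ψ).isL := h1.isL
  have a2 : (φ.imp χ).isL := h2.isL
  refine LDA.mp (LDA.mp (LDA.taut ?_ ?_) h1) h2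
  · exact isL_imp a1 (isL_imp a2 (isL_imp a1.1 ⟨a1.2, a2.2⟩))
  · intro v
    simp only [boolEval_imp, boolEval]
    cases boolEval v φ <;> cases boolEval v ψ <;> cases boolEval v χ <;> rfl

theorem isL_conjList : ∀ {l : List (Frm Agt)}, (∀ ψ ∈ l, ψ.isL) → (conjList l).isL
  | [], _ => ⟨trivial, trivial⟩
  | ψ :: l, h => ⟨h ψ (by simp), isL_conjList fun χ hχ => h χ (by simp [hχ])⟩

theorem LDA_conjList_nil : LDA (conjList ([] : List (Frm Agt))) := by
  refine LDA.taut ⟨trivial, trivial⟩ ?_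
  intro v
  simp only [conjList, boolEval]
  cases v (Frm.atom 0) <;> rfl

theorem conj_imp_mem {l : List (Frm Agt)} (hl : ∀ ψ ∈ l, ψ.isL) {ψ : Frm Agt}
    (hmem : ψ ∈ l) : LDA ((conjList l).imp ψ) := by
  induction l with
  | nil => simp at hmem
  | cons χ l ih =>
    have hχ : χ.isL := hl χ (by simp)
    have hcl : (conjList l).isL := isL_conjList fun ψ h => hl ψ (by simp [h])
    rcases List.mem_cons.1 hmem with rfl | hmem
    · refine LDA.taut (isL_imp ⟨hχ, hcl⟩ hχ) ?_
      intro v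
      simp only [boolEval_imp, boolEval, conjList]
      cases boolEval v ψ <;> cases boolEval v (conjList l) <;> rfl
    · have h2 := ih (fun ψ h => hl ψ (by simp [h])) hmem
      have hψ : ψ.isL := hl ψ (by simp [hmem])
      refine LDA_syl (ψ := conjList l) ?_ h2
      refine LDA.taut (isL_imp ⟨hχ, hcl⟩ hcl) ?_
      intro v
      simp only [boolEval_imp, boolEval, conjList]
      cases boolEval v χ <;> cases boolEval v (conjList l) <;> rfl

theorem conj_imp_conj {l1 l2 : List (Frm Agt)} (h1 : ∀ ψ ∈ l1, ψ.isL)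
    (hsub : ∀ ψ ∈ l2, ψ ∈ l1) : LDA ((conjList l1).imp (conjList l2)) := by
  induction l2 with
  | nil => exact LDA_imp_of LDA_conjList_nil (isL_conjList h1)
  | cons χ l2 ih =>
    exact LDA_imp_and (conj_imp_mem h1 (hsub χ (by simp)))
      (ih fun ψ h => hsub ψ (by simp [h]))

end Toolkit

/-! ### Consistency and maximal consistent sets -/

section MCSsec

variable {Agt : Type}

theorem LDA_and_l {φ ψ : Frm Agt} (hφ : φ.isL) (hψ : ψ.isL) :
    LDA ((φ.and ψ).imp φ) := by
  refine LDA.taut (isL_imp ⟨hφ, hψ⟩ hφ) ?_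
  intro v
  simp only [boolEval_imp, boolEval]
  cases boolEval v φ <;> cases boolEval v ψ <;> rfl

theorem LDA_and_r {φ ψ : Frm Agt} (hφ : φ.isL) (hψ : ψ.isL) :
    LDA ((φ.and ψ).imp ψ) := by
  refine LDA.taut (isL_imp ⟨hφ, hψ⟩ hψ) ?_
  intro v
  simp only [boolEval_imp, boolEval]
  cases boolEval v φ <;> cases boolEval v ψ <;> rfl

/-- Extraction: from a list over `insert χ Δ`, build a list over `Δ`. -/
theorem extract_list {χ : Frm Agt} (hχ : χ.isL) {Δ : Set (Frm Agt)} :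
    ∀ {l : List (Frm Agt)}, (∀ ψ ∈ l, ψ.isL) → (∀ ψ ∈ l, ψ = χ ∨ ψ ∈ Δ) →
      ∃ g : List (Frm Agt), (∀ ψ ∈ g, ψ ∈ Δ ∧ ψ.isL) ∧
        LDA ((χ.and (conjList g)).imp (conjList l)) := by
  intro l
  induction l with
  | nil =>
    intro _ _
    exact ⟨[], by simp, LDA_imp_of LDA_conjList_nil ⟨hχ, trivial, trivial⟩⟩
  | cons ψ l ih =>
    intro hisL hmem
    obtain ⟨g, hg, H⟩ := ih (fun ψ h => hisL ψ (by simp [h])) (fun ψ h => hmem ψ (by simp [h]))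
    have hψ : ψ.isL := hisL ψ (by simp)
    have hG : (conjList g).isL := isL_conjList fun χ h => (hg χ h).2
    rcases hmem ψ (by simp) with rfl | hψΔ
    · exact ⟨g, hg, LDA_imp_and (LDA_and_l hχ hG) H⟩
    · refine ⟨ψ :: g, ?_, ?_⟩
      · intro χ' h
        rcases List.mem_cons.1 h with rfl | h
        · exact ⟨hψΔ, hψ⟩
        · exact hg χ' h
      · -- goal : (χ ∧ (ψ ∧ G)) → (ψ ∧ conjList l)
        refine LDA_imp_and ?_ ?_
        · exact LDA_syl (LDA_and_r hχ ⟨hψ, hG⟩) (LDA_and_l hψ hG)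
        · exact LDA_syl (LDA_imp_and (LDA_and_l hχ ⟨hψ, hG⟩)
            (LDA_syl (LDA_and_r hχ ⟨hψ, hG⟩) (LDA_and_r hψ hG))) H

theorem inconsistent_insert {Δ : Set (Frm Agt)} (hΔ : ∀ ψ ∈ Δ, ψ.isL) {χ : Frm Agt}
    (hχ : χ.isL) (h : ¬ Consistent (insert χ Δ)) :
    ∃ g : List (Frm Agt), (∀ ψ ∈ g, ψ ∈ Δ ∧ ψ.isL) ∧
      LDA ((conjList g).imp (Frm.neg χ)) := by
  simp only [Consistent, not_forall, not_not] at h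
  obtain ⟨l, hl, hneg⟩ := h
  have hisL : ∀ ψ ∈ l, ψ.isL := by
    intro ψ hψ
    rcases hl ψ hψ with rfl | h'
    · exact hχ
    · exact hΔ ψ h'
  obtain ⟨g, hg, H⟩ := extract_list hχ hisL (fun ψ h => by
    rcases hl ψ h with h' | h'
    · exact Or.inl h'
    · exact Or.inr h')
  have hG : (conjList g).isL := isL_conjList fun ψ h => (hg ψ h).2
  have hL : (conjList l).isL := isL_conjList hisL
  refine ⟨g, hg, ?_⟩
  refine LDA.mp (LDA.mp (LDA.taut ?_ ?_) hneg) H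
  · exact isL_imp hL (isL_imp (isL_imp ⟨hχ, hG⟩ hL) (isL_imp hG hχ))
  · intro v
    simp only [boolEval_imp, boolEval]
    cases boolEval v χ <;> cases boolEval v (conjList g) <;>
      cases boolEval v (conjList l) <;> rfl

theorem Consistent.mono {Δ Δ' : Set (Frm Agt)} (hsub : Δ ⊆ Δ') (h : Consistent Δ') :
    Consistent Δ := fun l hl => h l fun ψ hψ => hsub (hl ψ hψ)

theorem two_imp_neg {A X : Frm Agt} (hA : A.isL) (hX : X.isL)
    (h1 : LDA (A.imp (Frm.neg X))) (h2 : LDA (A.imp (Frm.neg (Frm.neg X)))) :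
    LDA (Frm.neg A) := by
  refine LDA.mp (LDA.mp (LDA.taut ?_ ?_) h1) h2
  · exact isL_imp ⟨hA, hX⟩ (isL_imp ⟨hA, hX⟩ hA)
  · intro v
    simp only [boolEval_imp, boolEval]
    cases boolEval v A <;> cases boolEval v X <;> rfl

theorem consistent_insert_or {Γ : Set (Frm Agt)} (hΓL : ∀ ψ ∈ Γ, ψ.isL)
    (hc : Consistent Γ) {χ : Frm Agt} (hχ : χ.isL) :
    Consistent (insert χ Γ) ∨ Consistent (insert (Frm.neg χ) Γ) := by
  by_contra h
  push_neg at h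
  obtain ⟨g1, hg1, H1⟩ := inconsistent_insert hΓL hχ h.1
  obtain ⟨g2, hg2, H2⟩ := inconsistent_insert hΓL (show (Frm.neg χ).isL from hχ) h.2
  have hisL12 : ∀ ψ ∈ g1 ++ g2, ψ.isL := by
    intro ψ h'
    rcases List.mem_append.1 h' with h' | h'
    · exact (hg1 ψ h').2
    · exact (hg2 ψ h').2
  have p1 : LDA ((conjList (g1 ++ g2)).imp (conjList g1)) :=
    conj_imp_conj hisL12 (fun ψ h => List.mem_append.2 (Or.inl h))
  have p2 : LDA ((conjList (g1 ++ g2)).imp (conjList g2)) :=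
    conj_imp_conj hisL12 (fun ψ h => List.mem_append.2 (Or.inr h))
  have := two_imp_neg (isL_conjList hisL12) hχ (LDA_syl p1 H1) (LDA_syl p2 H2)
  refine hc (g1 ++ g2) ?_ this
  intro ψ h
  rcases List.mem_append.1 h with h' | h'
  · exact (hg1 ψ h').1
  · exact (hg2 ψ h').1

theorem mcs_mem_of_list {Γ : Set (Frm Agt)} (hΓ : MCS Γ) {l : List (Frm Agt)}
    (hl : ∀ ψ ∈ l, ψ ∈ Γ) {χ : Frm Agt} (H : LDA ((conjList l).imp χ)) (hχ : χ.isL) :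
    χ ∈ Γ := by
  have hΓL := hΓ.1
  have hlL : ∀ ψ ∈ l, ψ.isL := fun ψ h => hΓL ψ (hl ψ h)
  have hcons : Consistent (insert χ Γ) := by
    by_contra hk
    obtain ⟨g, hg, Hg⟩ := inconsistent_insert hΓL hχ hk
    have hisL : ∀ ψ ∈ l ++ g, ψ.isL := by
      intro ψ h'
      rcases List.mem_append.1 h' with h' | h'
      · exact hlL ψ h'
      · exact (hg ψ h').2
    have p1 := conj_imp_conj hisL (fun ψ h => List.mem_append.2 (Or.inl h)) (l2 := l)
    have p2 := conj_imp_conj hisL (fun ψ h => List.mem_append.2 (Or.inr h)) (l2 := g)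
    have hcontr : LDA (Frm.neg (conjList (l ++ g))) := by
      refine LDA.mp (LDA.mp (LDA.taut ?_ ?_) (LDA_syl p1 H)) (LDA_syl p2 Hg)
      · have hA := isL_conjList hisL
        exact isL_imp ⟨hA, hχ⟩ (isL_imp ⟨hA, hχ⟩ hA)
      · intro v
        simp only [boolEval_imp, boolEval]
        cases boolEval v (conjList (l ++ g)) <;> cases boolEval v χ <;> rfl
    exact hΓ.2.1 (l ++ g) (fun ψ h => by
      rcases List.mem_append.1 h with h' | h'
      · exact hl ψ h'
      · exact (hg ψ h').1) hcontr
  have hins : ∀ ψ ∈ insert χ Γ, ψ.isL := by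
    intro ψ h
    rcases h with rfl | h
    · exact hχ
    · exact hΓL ψ h
  have := hΓ.2.2 (insert χ Γ) hins hcons (Set.subset_insert _ _)
  rw [← this]
  exact Set.mem_insert _ _

theorem mcs_thm {Γ : Set (Frm Agt)} (hΓ : MCS Γ) {χ : Frm Agt} (h : LDA χ) : χ ∈ Γ :=
  mcs_mem_of_list hΓ (l := []) (by simp) (LDA_imp_of h ⟨trivial, trivial⟩) h.isL

theorem mcs_mp {Γ : Set (Frm Agt)} (hΓ : MCS Γ) {ψ χ : Frm Agt} (hψ : ψ ∈ Γ)
    (h : LDA (ψ.imp χ)) : χ ∈ Γ := by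
  have hψL : ψ.isL := hΓ.1 ψ hψ
  have hχL : χ.isL := (h.isL : (ψ.imp χ).isL).2
  refine mcs_mem_of_list hΓ (l := [ψ]) (by simpa using hψ) ?_ hχL
  exact LDA_syl (LDA_and_l hψL ⟨trivial, trivial⟩) h

theorem mcs_neg {Γ : Set (Frm Agt)} (hΓ : MCS Γ) {ψ : Frm Agt} (hψ : ψ.isL) :
    Frm.neg ψ ∈ Γ ↔ ψ ∉ Γ := by
  constructor
  · intro hn hp
    have : LDA (Frm.neg (conjList [ψ, Frm.neg ψ])) := by
      refine LDA.taut ?_ ?_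
      · exact ⟨hψ, hψ, trivial, trivial⟩
      · intro v
        simp only [conjList, boolEval]
        cases boolEval v ψ <;> cases v (Frm.atom 0) <;> rfl
    exact hΓ.2.1 [ψ, Frm.neg ψ] (by
      intro χ h
      rcases List.mem_cons.1 h with rfl | h
      · exact hp
      · simp only [List.mem_singleton] at h
        rw [h]
        exact hn) this
  · intro hnot
    rcases consistent_insert_or hΓ.1 hΓ.2.1 hψ with h | h
    · exfalso
      apply hnot
      have hins : ∀ χ ∈ insert ψ Γ, χ.isL := by
        intro χ hc
        rcases hc with rfl | hc
        · exact hψ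
        · exact hΓ.1 χ hc
      have := hΓ.2.2 _ hins h (Set.subset_insert _ _)
      rw [← this]
      exact Set.mem_insert _ _
    · have hins : ∀ χ ∈ insert (Frm.neg ψ) Γ, χ.isL := by
        intro χ hc
        rcases hc with rfl | hc
        · exact hψ
        · exact hΓ.1 χ hc
      have := hΓ.2.2 _ hins h (Set.subset_insert _ _)
      rw [← this]
      exact Set.mem_insert _ _

theorem mcs_and {Γ : Set (Frm Agt)} (hΓ : MCS Γ) {ψ χ : Frm Agt} :
    ψ.and χ ∈ Γ ↔ ψ ∈ Γ ∧ χ ∈ Γ := by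
  constructor
  · intro h
    have hL : (ψ.and χ).isL := hΓ.1 _ h
    exact ⟨mcs_mp hΓ h (LDA_and_l hL.1 hL.2), mcs_mp hΓ h (LDA_and_r hL.1 hL.2)⟩
  · rintro ⟨h1, h2⟩
    have hψL : ψ.isL := hΓ.1 _ h1
    have hχL : χ.isL := hΓ.1 _ h2
    refine mcs_mem_of_list hΓ (l := [ψ, χ]) ?_ ?_ ⟨hψL, hχL⟩
    · intro φ h
      rcases List.mem_cons.1 h with rfl | h
      · exact h1
      · simp only [List.mem_singleton] at h
        rw [h]
        exact h2
    · exact LDA_imp_and (LDA_and_l hψL ⟨hχL, trivial, trivial⟩)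
        (LDA_syl (LDA_and_r hψL ⟨hχL, trivial, trivial⟩) (LDA_and_l hχL ⟨trivial, trivial⟩))

theorem list_subset_chain {c : Set (Set (Frm Agt))} (hchain : IsChain (· ⊆ ·) c)
    (hne : c.Nonempty) :
    ∀ l : List (Frm Agt), (∀ ψ ∈ l, ψ ∈ ⋃₀ c) → ∃ t ∈ c, ∀ ψ ∈ l, ψ ∈ t := by
  intro l
  induction l with
  | nil => exact fun _ => ⟨hne.choose, hne.choose_spec, by simp⟩
  | cons ψ l ih =>
    intro hl
    obtain ⟨t, htc, ht⟩ := ih (fun χ h => hl χ (by simp [h]))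
    obtain ⟨t', ht'c, hψt'⟩ := hl ψ (by simp)
    rcases eq_or_ne t t' with rfl | hne'
    · exact ⟨t, htc, by
        intro χ h
        rcases List.mem_cons.1 h with rfl | h
        · exact hψt'
        · exact ht χ h⟩
    · rcases hchain htc ht'c hne' with hsub | hsub
      · exact ⟨t', ht'c, by
          intro χ h
          rcases List.mem_cons.1 h with rfl | h
          · exact hψt'
          · exact hsub (ht χ h)⟩
      · exact ⟨t, htc, by
          intro χ h
          rcases List.mem_cons.1 h with rfl | h
          · exact hsub hψt'
          · exact ht χ h⟩

theorem lindenbaum {Δ : Set (Frm Agt)} (hL : ∀ ψ ∈ Δ, ψ.isL) (hc : Consistent Δ) :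
    ∃ Γ, MCS Γ ∧ Δ ⊆ Γ := by
  set S : Set (Set (Frm Agt)) := {Γ | (∀ ψ ∈ Γ, ψ.isL) ∧ Consistent Γ} with hS
  have hzorn : ∀ c ⊆ S, IsChain (· ⊆ ·) c → c.Nonempty → ∃ ub ∈ S, ∀ s ∈ c, s ⊆ ub := by
    intro c hcS hchain hne
    refine ⟨⋃₀ c, ⟨?_, ?_⟩, fun s hs => Set.subset_sUnion_of_mem hs⟩
    · rintro ψ ⟨t, htc, hψt⟩
      exact (hcS htc).1 ψ hψt
    · intro l hl hneg
      obtain ⟨t, htc, ht⟩ := list_subset_chain hchain hne l hl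
      exact (hcS htc).2 l ht hneg
  obtain ⟨m, hΔm, hmax⟩ := zorn_subset_nonempty S hzorn Δ ⟨hL, hc⟩
  refine ⟨m, ⟨hmax.1.1, hmax.1.2, ?_⟩, hΔm⟩
  intro Δ' hΔ'L hΔ'c hsub
  exact subset_antisymm (hmax.2 ⟨hΔ'L, hΔ'c⟩ hsub) hsub

end MCSsec

/-! ### Modal reasoning and the canonical construction -/

section Modal

variable {Agt : Type}

theorem LDA_imp_self {φ : Frm Agt} (h : φ.isL) : LDA (φ.imp φ) := by
  refine LDA.taut (isL_imp h h) ?_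
  intro v
  simp only [boolEval_imp]
  cases boolEval v φ <;> rfl

theorem LDA_dneg {φ : Frm Agt} (h : φ.isL) : LDA ((Frm.neg (Frm.neg φ)).imp φ) := by
  refine LDA.taut (isL_imp h h) ?_
  intro v
  simp only [boolEval_imp, boolEval]
  cases boolEval v φ <;> rfl

theorem box_conj_imp (i : Agt) :
    ∀ {l : List (Frm Agt)}, (∀ ψ ∈ l, ψ.isL) → ∀ {χ : Frm Agt}, χ.isL →
      LDA ((conjList l).imp χ) →
      LDA ((conjList (l.map (Frm.impbel i))).imp (Frm.impbel i χ)) := by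
  intro l
  induction l with
  | nil =>
    intro _ χ hχ h
    exact LDA_imp_of (LDA.nec i (LDA.mp h LDA_conjList_nil)) ⟨trivial, trivial⟩
  | cons ψ l ih =>
    intro hl χ hχ h
    have hψ : ψ.isL := hl ψ (by simp)
    have hlL : ∀ φ ∈ l, φ.isL := fun φ hm => hl φ (by simp [hm])
    have hC : (conjList l).isL := isL_conjList hlL
    -- export: (ψ ∧ C) → χ gives C → (ψ → χ)
    have hexp : LDA ((conjList l).imp (ψ.imp χ)) := by
      refine LDA.mp (LDA.taut ?_ ?_) h
      · exact isL_imp (isL_imp ⟨hψ, hC⟩ hχ) (isL_imp hC (isL_imp hψ hχ))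
      · intro v
        simp only [boolEval_imp, boolEval, conjList]
        cases boolEval v ψ <;> cases boolEval v (conjList l) <;>
          cases boolEval v χ <;> rfl
    have hIH := ih hlL (isL_imp hψ hχ) hexp
    have hK := LDA.axK (Agt := Agt) i (φ := ψ) (ψ := χ) hψ hχ
    -- combine: (□ψ ∧ M) → □χ from M → X and (□ψ ∧ X) → □χ
    have hM : (conjList (l.map (Frm.impbel i))).isL :=
      isL_conjList (by
        intro φ hm
        obtain ⟨φ', hφ', rfl⟩ := List.mem_map.1 hm
        exact hlL φ' hφ')
    refine LDA.mp (LDA.mp (LDA.taut ?_ ?_) hIH) hK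
    · exact isL_imp ⟨hM, hψ, hχ⟩ (isL_imp ⟨⟨hψ, hψ, hχ⟩, hχ⟩ ⟨⟨hψ, hM⟩, hχ⟩)
    · intro v
      simp only [conjList, List.map, boolEval_imp, boolEval]
      cases v (Frm.impbel i ψ) <;>
        cases boolEval v (conjList (List.map (Frm.impbel i) l)) <;>
        cases v (Frm.impbel i (ψ.imp χ)) <;>
        cases v (Frm.impbel i χ) <;> rfl

theorem inconsistent_pair {Γ : Set (Frm Agt)} (hΓ : MCS Γ) {A B : Frm Agt}
    (hA : A ∈ Γ) (hB : B ∈ Γ) (h : LDA (Frm.neg (A.and B))) : False := by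
  have hAL : A.isL := hΓ.1 _ hA
  have hBL : B.isL := hΓ.1 _ hB
  have hneg : LDA (Frm.neg (conjList [A, B])) := by
    refine LDA.mp (LDA.taut ?_ ?_) h
    · exact isL_imp ⟨hAL, hBL⟩ ⟨hAL, hBL, trivial, trivial⟩
    · intro v
      simp only [conjList, boolEval_imp, boolEval]
      cases boolEval v A <;> cases boolEval v B <;> cases v (Frm.atom 0) <;> rfl
  refine hΓ.2.1 [A, B] ?_ hneg
  intro ψ hm
  rcases List.mem_cons.1 hm with rfl | hm
  · exact hA
  · simp only [List.mem_singleton] at hm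
    rw [hm]
    exact hB

/-- The canonical accessibility relation between MCSs. -/
def canR (i : Agt) (u v : {Γ : Set (Frm Agt) // MCS Γ}) : Prop :=
  ∀ ψ : Frm Agt, Frm.impbel i ψ ∈ u.val → ψ ∈ v.val

theorem boxed_isL {i : Agt} {u : {Γ : Set (Frm Agt) // MCS Γ}} :
    ∀ ψ ∈ {ψ : Frm Agt | Frm.impbel i ψ ∈ u.val}, ψ.isL := by
  intro ψ h
  exact u.2.1 (Frm.impbel i ψ) h

theorem boxed_consistent (i : Agt) (u : {Γ : Set (Frm Agt) // MCS Γ}) :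
    Consistent {ψ : Frm Agt | Frm.impbel i ψ ∈ u.val} := by
  intro l hl hneg
  have hlL : ∀ ψ ∈ l, ψ.isL := fun ψ h => u.2.1 (Frm.impbel i ψ) (hl ψ h)
  have hCL : (conjList l).isL := isL_conjList hlL
  have hbox : Frm.impbel i (conjList l) ∈ u.val := by
    refine mcs_mem_of_list u.2 (l := l.map (Frm.impbel i)) ?_ ?_ hCL
    · intro ψ hm
      obtain ⟨ψ', hψ', rfl⟩ := List.mem_map.1 hm
      exact hl ψ' hψ'
    · exact box_conj_imp i hlL hCL (LDA_imp_self hCL)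
  have hboxneg : Frm.impbel i (Frm.neg (conjList l)) ∈ u.val :=
    mcs_thm u.2 (LDA.nec i hneg)
  exact inconsistent_pair u.2 hbox hboxneg (LDA.axD i hCL)

theorem canR_ser (i : Agt) (u : {Γ : Set (Frm Agt) // MCS Γ}) :
    ∃ v : {Γ : Set (Frm Agt) // MCS Γ}, canR i u v := by
  obtain ⟨Γ', hΓ', hsub⟩ := lindenbaum boxed_isL (boxed_consistent i u)
  exact ⟨⟨Γ', hΓ'⟩, fun ψ h => hsub h⟩

theorem canR_ex (i : Agt) (u : {Γ : Set (Frm Agt) // MCS Γ}) {χ : Frm Agt}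
    (hχL : χ.isL) (h : Frm.impbel i χ ∉ u.val) :
    ∃ v : {Γ : Set (Frm Agt) // MCS Γ}, canR i u v ∧ χ ∉ v.val := by
  have hcons : Consistent (insert (Frm.neg χ) {ψ : Frm Agt | Frm.impbel i ψ ∈ u.val}) := by
    by_contra hk
    obtain ⟨g, hg, Hg⟩ := inconsistent_insert boxed_isL (show (Frm.neg χ).isL from hχL) hk
    have hgL : ∀ ψ ∈ g, ψ.isL := fun ψ hm => (hg ψ hm).2
    have Hχ : LDA ((conjList g).imp χ) := LDA_syl Hg (LDA_dneg hχL)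
    have hbox : Frm.impbel i χ ∈ u.val := by
      refine mcs_mem_of_list u.2 (l := g.map (Frm.impbel i)) ?_ ?_ hχL
      · intro ψ hm
        obtain ⟨ψ', hψ', rfl⟩ := List.mem_map.1 hm
        exact (hg ψ' hψ').1
      · exact box_conj_imp i hgL hχL Hχ
    exact h hbox
  have hinsL : ∀ ψ ∈ insert (Frm.neg χ) {ψ : Frm Agt | Frm.impbel i ψ ∈ u.val}, ψ.isL := by
    intro ψ hm
    rcases hm with rfl | hm
    · exact hχL
    · exact u.2.1 (Frm.impbel i ψ) hm
  obtain ⟨Γ', hΓ', hsub⟩ := lindenbaum hinsL hcons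
  refine ⟨⟨Γ', hΓ'⟩, fun ψ hm => hsub (Set.mem_insert_of_mem _ hm), ?_⟩
  exact (mcs_neg hΓ' hχL).1 (hsub (Set.mem_insert _ _))

end Modal

/-! ### Subformulas -/

section Subf

variable {Agt : Type}

noncomputable instance : DecidableEq (Frm Agt) := Classical.decEq _

noncomputable def subf : Frm Agt → Finset (Frm Agt)
  | .atom p => {.atom p}
  | .neg ψ => insert (Frm.neg ψ) (subf ψ)
  | .and ψ χ => insert (Frm.and ψ χ) (subf ψ ∪ subf χ)
  | .expbel i α => insert (Frm.expbel i α) (subf α)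
  | .impbel i ψ => insert (Frm.impbel i ψ) (subf ψ)

theorem self_mem_subf : ∀ φ : Frm Agt, φ ∈ subf φ := by
  intro φ
  cases φ <;> simp [subf]

theorem subf_trans : ∀ {φ ψ : Frm Agt}, ψ ∈ subf φ → subf ψ ⊆ subf φ := by
  intro φ
  induction φ with
  | atom p =>
    intro ψ h
    simp only [subf, Finset.mem_singleton] at h
    subst h
    exact fun _ h => h
  | neg φ ih =>
    intro ψ h
    simp only [subf, Finset.mem_insert] at h
    rcases h with rfl | h
    · exact fun _ h => h
    · exact (ih h).trans (Finset.subset_insert _ _)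
  | and φ1 φ2 ih1 ih2 =>
    intro ψ h
    simp only [subf, Finset.mem_insert, Finset.mem_union] at h
    rcases h with rfl | h | h
    · exact fun _ h => h
    · exact (ih1 h).trans ((Finset.subset_union_left).trans (Finset.subset_insert _ _))
    · exact (ih2 h).trans ((Finset.subset_union_right).trans (Finset.subset_insert _ _))
  | expbel i φ ih =>
    intro ψ h
    simp only [subf, Finset.mem_insert] at h
    rcases h with rfl | h
    · exact fun _ h => h
    · exact (ih h).trans (Finset.subset_insert _ _)
  | impbel i φ ih =>
    intro ψ h
    simp only [subf, Finset.mem_insert] at h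
    rcases h with rfl | h
    · exact fun _ h => h
    · exact (ih h).trans (Finset.subset_insert _ _)

theorem neg_mem_subf {φ ψ : Frm Agt} (h : Frm.neg ψ ∈ subf φ) : ψ ∈ subf φ :=
  subf_trans h (by simp [subf, self_mem_subf])

theorem and_mem_subf {φ ψ χ : Frm Agt} (h : Frm.and ψ χ ∈ subf φ) :
    ψ ∈ subf φ ∧ χ ∈ subf φ :=
  ⟨subf_trans h (by simp [subf, self_mem_subf]),
   subf_trans h (by simp [subf, self_mem_subf])⟩

theorem expbel_mem_subf {φ ψ : Frm Agt} {i : Agt} (h : Frm.expbel i ψ ∈ subf φ) :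
    ψ ∈ subf φ :=
  subf_trans h (by simp [subf, self_mem_subf])

theorem impbel_mem_subf {φ ψ : Frm Agt} {i : Agt} (h : Frm.impbel i ψ ∈ subf φ) :
    ψ ∈ subf φ :=
  subf_trans h (by simp [subf, self_mem_subf])

theorem subf_isL0 : ∀ {φ : Frm Agt}, φ.isL0 → ∀ {ψ : Frm Agt}, ψ ∈ subf φ → ψ.isL0 := by
  intro φ
  induction φ with
  | atom p =>
    intro _ ψ h
    simp only [subf, Finset.mem_singleton] at h
    subst h
    trivial
  | neg φ ih =>
    intro hL ψ h
    simp only [subf, Finset.mem_insert] at h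
    rcases h with rfl | h
    · exact hL
    · exact ih hL h
  | and φ1 φ2 ih1 ih2 =>
    intro hL ψ h
    simp only [subf, Finset.mem_insert, Finset.mem_union] at h
    rcases h with rfl | h | h
    · exact hL
    · exact ih1 hL.1 h
    · exact ih2 hL.2 h
  | expbel i φ ih =>
    intro hL ψ h
    simp only [subf, Finset.mem_insert] at h
    rcases h with rfl | h
    · exact hL
    · exact ih hL h
  | impbel i φ ih =>
    intro hL
    exact hL.elim

theorem subf_isL : ∀ {φ : Frm Agt}, φ.isL → ∀ {ψ : Frm Agt}, ψ ∈ subf φ → ψ.isL := by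
  intro φ
  induction φ with
  | atom p =>
    intro _ ψ h
    simp only [subf, Finset.mem_singleton] at h
    subst h
    trivial
  | neg φ ih =>
    intro hL ψ h
    simp only [subf, Finset.mem_insert] at h
    rcases h with rfl | h
    · exact hL
    · exact ih hL h
  | and φ1 φ2 ih1 ih2 =>
    intro hL ψ h
    simp only [subf, Finset.mem_insert, Finset.mem_union] at h
    rcases h with rfl | h | h
    · exact hL
    · exact ih1 hL.1 h
    · exact ih2 hL.2 h
  | expbel i φ ih =>
    intro hL ψ h
    simp only [subf, Finset.mem_insert] at h
    rcases h with rfl | h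
    · exact hL
    · exact isL_of_isL0 (subf_isL0 hL h)
  | impbel i φ ih =>
    intro hL ψ h
    simp only [subf, Finset.mem_insert] at h
    rcases h with rfl | h
    · exact hL
    · exact ih hL h

/-- A strict upper bound on the atoms occurring in a formula. -/
def atomBound : Frm Agt → ℕ
  | .atom p => p + 1
  | .neg ψ => atomBound ψ
  | .and ψ χ => max (atomBound ψ) (atomBound χ)
  | .expbel _ α => atomBound α
  | .impbel _ ψ => atomBound ψ

theorem subf_atomBound : ∀ {φ ψ : Frm Agt}, ψ ∈ subf φ → atomBound ψ ≤ atomBound φ := by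
  intro φ
  induction φ with
  | atom p =>
    intro ψ h
    simp only [subf, Finset.mem_singleton] at h
    subst h
    exact le_refl _
  | neg φ ih =>
    intro ψ h
    simp only [subf, Finset.mem_insert] at h
    rcases h with rfl | h
    · exact le_refl _
    · exact ih h
  | and φ1 φ2 ih1 ih2 =>
    intro ψ h
    simp only [subf, Finset.mem_insert, Finset.mem_union] at h
    rcases h with rfl | h | h
    · exact le_refl _
    · exact (ih1 h).trans (le_max_left _ _)
    · exact (ih2 h).trans (le_max_right _ _)
  | expbel i φ ih =>
    intro ψ h
    simp only [subf, Finset.mem_insert] at h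
    rcases h with rfl | h
    · exact le_refl _
    · exact ih h
  | impbel i φ ih =>
    intro ψ h
    simp only [subf, Finset.mem_insert] at h
    rcases h with rfl | h
    · exact le_refl _
    · exact ih h

theorem atom_mem_lt {φ : Frm Agt} {p : ℕ} (h : Frm.atom p ∈ subf φ) :
    p < atomBound φ := subf_atomBound h

end Subf

/-! ### Soundness -/

section Soundness

variable {Agt : Type}

theorem msat_imp {Cxt : Set (MABase Agt)} {b : MABase Agt} {ψ χ : Frm Agt} :
    msat Cxt b (ψ.imp χ) ↔ (msat Cxt b ψ → msat Cxt b χ) := by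
  simp only [Frm.imp, msat]
  tauto

theorem bsat_iff_msat {Cxt : Set (MABase Agt)} {b : MABase Agt} :
    ∀ {α : Frm Agt}, α.isL0 → (msat Cxt b α ↔ b.bsat α) := by
  intro α
  induction α with
  | atom p => exact fun _ => Iff.rfl
  | neg α ih => exact fun h => by simp only [msat, MABase.bsat, ih h]
  | and α β ih1 ih2 => exact fun h => by simp only [msat, MABase.bsat, ih1 h.1, ih2 h.2]
  | expbel i α ih => exact fun _ => Iff.rfl
  | impbel i α ih => exact fun h => h.elim

open Classical in
theorem boolEval_msat {Cxt : Set (MABase Agt)} {b : MABase Agt} :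
    ∀ φ : Frm Agt, boolEval (fun ψ => decide (msat Cxt b ψ)) φ = decide (msat Cxt b φ) := by
  intro φ
  induction φ with
  | atom p => rfl
  | neg φ ih =>
    show (!boolEval (fun ψ => decide (msat Cxt b ψ)) φ) = decide (msat Cxt b (Frm.neg φ))
    rw [ih]
    simp only [msat]
    by_cases h : msat Cxt b φ <;> simp [h]
  | and φ χ ih1 ih2 =>
    show (boolEval _ φ && boolEval _ χ) = decide (msat Cxt b (Frm.and φ χ))
    rw [ih1, ih2]
    simp only [msat]
    by_cases h1 : msat Cxt b φ <;> by_cases h2 : msat Cxt b χ <;> simp [h1, h2]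
  | expbel i α ih => rfl
  | impbel i φ ih => rfl

theorem isCMAB_mem {b b' : MABase Agt} {Cxt : Set (MABase Agt)} (hC : isCMAB b Cxt)
    (hb' : b' ∈ Cxt) : isCMAB b' Cxt := by
  constructor
  · intro b'' h
    rcases h with rfl | h
    · exact hC.1 b'' (Set.mem_insert_of_mem _ hb')
    · exact hC.1 b'' (Set.mem_insert_of_mem _ h)
  · intro i b'' h
    rcases h with rfl | h
    · exact hC.2 i b'' (Set.mem_insert_of_mem _ hb')
    · exact hC.2 i b'' (Set.mem_insert_of_mem _ h)

theorem LDA_sound {φ : Frm Agt} (h : LDA φ) :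
    ∀ (b : MABase Agt) (Cxt : Set (MABase Agt)), isCMAB b Cxt → msat Cxt b φ := by
  induction h with
  | taut hisL htaut =>
    intro b Cxt _
    classical
    have := htaut (fun ψ => decide (msat Cxt b ψ))
    rw [boolEval_msat] at this
    exact of_decide_eq_true this
  | axK i hφ hψ =>
    intro b Cxt _
    rw [msat_imp]
    rintro ⟨h1, h2⟩ b' hb' hR
    have h3 := h2 b' hb' hR
    rw [msat_imp] at h3
    exact h3 (h1 b' hb' hR)
  | axD i hφ =>
    intro b Cxt hC
    rintro ⟨h1, h2⟩
    obtain ⟨b'', hb'', hR⟩ := hC.2 i b (Set.mem_insert _ _)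
    exact h2 b'' hb'' hR (h1 b'' hb'' hR)
  | axInt i hα =>
    intro b Cxt _
    rw [msat_imp]
    intro hmem b' hb' hR
    exact (bsat_iff_msat hα).2 (hR _ hmem)
  | mp h1 h2 ih1 ih2 =>
    intro b Cxt hC
    exact (msat_imp.1 (ih1 b Cxt hC)) (ih2 b Cxt hC)
  | nec i h ih =>
    intro b Cxt hC
    intro b' hb' _
    exact ih b' Cxt (isCMAB_mem hC hb')

end Soundness

/-! ### The canonical consistent multi-agent belief model -/

section Completeness

variable {Agt : Type}

open Classical in
/-- The `subf φ`-theory of an MCS. -/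
noncomputable def cthy (φ : Frm Agt) (w : {Γ : Set (Frm Agt) // MCS Γ}) :
    Finset (Frm Agt) :=
  (subf φ).filter (fun ψ => ψ ∈ w.val)

open Classical in
theorem mem_cthy {φ ψ : Frm Agt} {w : {Γ : Set (Frm Agt) // MCS Γ}} :
    ψ ∈ cthy φ w ↔ ψ ∈ subf φ ∧ ψ ∈ w.val := by
  classical
  simp [cthy]

theorem cthy_mem_powerset {φ : Frm Agt} (w : {Γ : Set (Frm Agt) // MCS Γ}) :
    cthy φ w ∈ (subf φ).powerset :=
  Finset.mem_powerset.2 (fun x hx => (mem_cthy.1 hx).1)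

/-- Fresh atoms naming the `subf φ`-theories. -/
noncomputable def cnm (φ : Frm Agt) (t : Finset (Frm Agt)) : ℕ :=
  atomBound φ + (subf φ).powerset.toList.idxOf t

theorem cnm_ge {φ : Frm Agt} (t : Finset (Frm Agt)) : atomBound φ ≤ cnm φ t :=
  Nat.le_add_right _ _

theorem cnm_inj {φ : Frm Agt} {t1 t2 : Finset (Frm Agt)}
    (h1 : t1 ∈ (subf φ).powerset) (h2 : t2 ∈ (subf φ).powerset)
    (h : cnm φ t1 = cnm φ t2) : t1 = t2 := by
  have h' := Nat.add_left_cancel h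
  exact (List.idxOf_inj (Finset.mem_toList.2 h1)).1 h'

/-- Filtrated accessibility between theories. -/
def cacc (φ : Frm Agt) (i : Agt) (s t : Finset (Frm Agt)) : Prop :=
  ∃ u v : {Γ : Set (Frm Agt) // MCS Γ}, cthy φ u = s ∧ cthy φ v = t ∧ canR i u v

/-- The belief base associated with an MCS. -/
noncomputable def cbase (φ : Frm Agt) (w : {Γ : Set (Frm Agt) // MCS Γ}) : MABase Agt where
  B := fun i =>
    {α | Frm.expbel i α ∈ subf φ ∧ Frm.expbel i α ∈ w.val} ∪
    {β | ∃ t : Finset (Frm Agt), (∃ v : {Γ : Set (Frm Agt) // MCS Γ}, cthy φ v = t) ∧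
      ¬ cacc φ i (cthy φ w) t ∧ β = Frm.neg (Frm.atom (cnm φ t))}
  V := {p | Frm.atom p ∈ subf φ ∧ Frm.atom p ∈ w.val} ∪ {cnm φ (cthy φ w)}

/-- The canonical context. -/
noncomputable def cCxt (φ : Frm Agt) : Set (MABase Agt) := Set.range (cbase φ)

theorem atom_mem_V {φ : Frm Agt} {p : ℕ} (hp : Frm.atom p ∈ subf φ)
    {v : {Γ : Set (Frm Agt) // MCS Γ}} :
    p ∈ (cbase φ v).V ↔ Frm.atom p ∈ v.val := by
  constructor
  · rintro (⟨_, h⟩ | h)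
    · exact h
    · exfalso
      simp only [Set.mem_singleton_iff] at h
      have := atom_mem_lt hp
      have := cnm_ge (φ := φ) (cthy φ v)
      omega
  · intro h
    exact Or.inl ⟨hp, h⟩

theorem cnm_mem_V {φ : Frm Agt} {t : Finset (Frm Agt)} (ht : t ∈ (subf φ).powerset)
    {v : {Γ : Set (Frm Agt) // MCS Γ}} :
    cnm φ t ∈ (cbase φ v).V ↔ t = cthy φ v := by
  constructor
  · rintro (⟨hs, _⟩ | h)
    · exfalso
      have := atom_mem_lt hs
      have := cnm_ge (φ := φ) t
      omega
    · simp only [Set.mem_singleton_iff] at h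
      exact cnm_inj ht (cthy_mem_powerset v) h
  · rintro rfl
    exact Or.inr rfl

/-- Truth lemma for `L0`-formulas. -/
theorem bsat_cbase {φ : Frm Agt} (hφ : φ.isL) :
    ∀ {α : Frm Agt}, α.isL0 → α ∈ subf φ → ∀ v : {Γ : Set (Frm Agt) // MCS Γ},
      ((cbase φ v).bsat α ↔ α ∈ v.val) := by
  intro α
  induction α with
  | atom p => exact fun _ hs v => atom_mem_V hs
  | neg α ih =>
    intro hL hs v
    have hαs : α ∈ subf φ := neg_mem_subf hs
    have hαL : α.isL := isL_of_isL0 hL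
    show ¬ (cbase φ v).bsat α ↔ Frm.neg α ∈ v.val
    rw [ih hL hαs v, mcs_neg v.2 hαL]
  | and α β ih1 ih2 =>
    intro hL hs v
    obtain ⟨hαs, hβs⟩ := and_mem_subf hs
    show ((cbase φ v).bsat α ∧ (cbase φ v).bsat β) ↔ _
    rw [ih1 hL.1 hαs v, ih2 hL.2 hβs v, mcs_and v.2]
  | expbel i α ih =>
    intro hL hs v
    show α ∈ (cbase φ v).B i ↔ _
    constructor
    · rintro (⟨_, h⟩ | ⟨t, _, _, rfl⟩)
      · exact h
      · exfalso
        have h1 : Frm.atom (cnm φ t) ∈ subf φ := neg_mem_subf (expbel_mem_subf hs)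
        have := atom_mem_lt h1
        have := cnm_ge (φ := φ) t
        omega
    · intro h
      exact Or.inl ⟨hs, h⟩
  | impbel i α ih => exact fun hL => hL.elim

/-- Canonical accessibility implies base accessibility. -/
theorem R_of_canR {φ : Frm Agt} (hφ : φ.isL) {i : Agt}
    {u v : {Γ : Set (Frm Agt) // MCS Γ}} (h : canR i u v) :
    MABase.R i (cbase φ u) (cbase φ v) := by
  rintro α (⟨hs, hm⟩ | ⟨t, ⟨v', rfl⟩, hnacc, rfl⟩)
  · have hα0 : α.isL0 := subf_isL hφ hs
    have hbox : Frm.impbel i α ∈ u.val := mcs_mp u.2 hm (LDA.axInt i hα0)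
    have hαv : α ∈ v.val := h α hbox
    exact (bsat_cbase hφ hα0 (expbel_mem_subf hs) v).2 hαv
  · show ¬ (cbase φ v).bsat (Frm.atom (cnm φ (cthy φ v')))
    show ¬ cnm φ (cthy φ v') ∈ (cbase φ v).V
    rw [cnm_mem_V (cthy_mem_powerset v')]
    intro heq
    exact hnacc ⟨u, v, rfl, heq.symm, h⟩

/-- Base accessibility implies filtrated accessibility. -/
theorem cacc_of_R {φ : Frm Agt} {i : Agt} {u v : {Γ : Set (Frm Agt) // MCS Γ}}
    (h : MABase.R i (cbase φ u) (cbase φ v)) : cacc φ i (cthy φ u) (cthy φ v) := by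
  by_contra hn
  have hmem : Frm.neg (Frm.atom (cnm φ (cthy φ v))) ∈ (cbase φ u).B i :=
    Or.inr ⟨cthy φ v, ⟨v, rfl⟩, hn, rfl⟩
  have := h _ hmem
  have h2 : ¬ cnm φ (cthy φ v) ∈ (cbase φ v).V := this
  exact h2 ((cnm_mem_V (cthy_mem_powerset v)).2 rfl)

theorem isCMAB_canonical {φ : Frm Agt} (hφ : φ.isL) (w0 : {Γ : Set (Frm Agt) // MCS Γ}) :
    isCMAB (cbase φ w0) (cCxt φ) := by
  have hmem0 : cbase φ w0 ∈ cCxt φ := ⟨w0, rfl⟩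
  constructor
  · intro b' hb'
    have hb'' : b' ∈ cCxt φ := by
      rcases hb' with rfl | hb'
      · exact hmem0
      · exact hb'
    obtain ⟨u, rfl⟩ := hb''
    rintro i α (⟨hs, _⟩ | ⟨t, _, _, rfl⟩)
    · exact subf_isL hφ hs
    · trivial
  · intro i b' hb'
    have hb'' : b' ∈ cCxt φ := by
      rcases hb' with rfl | hb'
      · exact hmem0
      · exact hb'
    obtain ⟨u, rfl⟩ := hb''
    obtain ⟨v, hv⟩ := canR_ser i u
    exact ⟨cbase φ v, ⟨v, rfl⟩, R_of_canR hφ hv⟩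

/-- Truth lemma for the canonical CMAB. -/
theorem truth_lemma {φ : Frm Agt} (hφ : φ.isL) :
    ∀ {ψ : Frm Agt}, ψ ∈ subf φ → ∀ u : {Γ : Set (Frm Agt) // MCS Γ},
      (msat (cCxt φ) (cbase φ u) ψ ↔ ψ ∈ u.val) := by
  intro ψ
  induction ψ with
  | atom p => exact fun hs u => atom_mem_V hs
  | neg ψ ih =>
    intro hs u
    have hψs : ψ ∈ subf φ := neg_mem_subf hs
    have hψL : ψ.isL := subf_isL hφ hψs
    show ¬ msat (cCxt φ) (cbase φ u) ψ ↔ _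
    rw [ih hψs u, mcs_neg u.2 hψL]
  | and ψ χ ih1 ih2 =>
    intro hs u
    obtain ⟨hψs, hχs⟩ := and_mem_subf hs
    show (msat _ _ ψ ∧ msat _ _ χ) ↔ _
    rw [ih1 hψs u, ih2 hχs u, mcs_and u.2]
  | expbel i α ih =>
    intro hs u
    have hL0 : (Frm.expbel i α).isL0 := subf_isL hφ hs
    show α ∈ (cbase φ u).B i ↔ _
    exact bsat_cbase hφ hL0 hs u
  | impbel i χ ih =>
    intro hs u
    have hχs : χ ∈ subf φ := impbel_mem_subf hs
    have hχL : χ.isL := subf_isL hφ hχs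
    constructor
    · intro hmsat
      by_contra hnot
      obtain ⟨v, hcan, hχv⟩ := canR_ex i u hχL hnot
      have hR := R_of_canR hφ hcan
      have := hmsat (cbase φ v) ⟨v, rfl⟩ hR
      exact hχv ((ih hχs v).1 this)
    · intro hmem b' hb' hR
      obtain ⟨v, rfl⟩ := hb'
      obtain ⟨u', v', htu, htv, hcan⟩ := cacc_of_R hR
      have hbox' : Frm.impbel i χ ∈ u'.val := by
        have h1 : Frm.impbel i χ ∈ cthy φ u := mem_cthy.2 ⟨hs, hmem⟩
        rw [← htu] at h1
        exact (mem_cthy.1 h1).2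
      have hχv' : χ ∈ v'.val := hcan χ hbox'
      have hχv : χ ∈ v.val := by
        have h1 : χ ∈ cthy φ v' := mem_cthy.2 ⟨hχs, hχv'⟩
        rw [htv] at h1
        exact (mem_cthy.1 h1).2
      exact (ih hχs v).2 hχv

theorem neg_consistent {φ : Frm Agt} (hφ : φ.isL) (hnd : ¬ LDA φ) :
    Consistent {Frm.neg φ} := by
  intro l hl hneg
  apply hnd
  have hl' : ∀ ψ ∈ l, ψ = Frm.neg φ := fun ψ h => hl ψ h
  have hlL : ∀ ψ ∈ l, ψ.isL := by
    intro ψ h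
    rw [hl' ψ h]
    exact hφ
  have himp : LDA ((Frm.neg φ).imp (conjList l)) := by
    clear hneg
    induction l with
    | nil => exact LDA_imp_of LDA_conjList_nil hφ
    | cons ψ l ih =>
      have h1 : ψ = Frm.neg φ := hl' ψ (by simp)
      subst h1
      refine LDA_imp_and (LDA_imp_self hφ) (ih ?_ ?_ ?_)
      · intro χ h
        exact hl χ (by simp [h])
      · intro χ h
        exact hl' χ (by simp [h])
      · intro χ h
        exact hlL χ (by simp [h])
  have hdd : LDA (Frm.neg (Frm.neg φ)) := by
    refine LDA.mp (LDA.mp (LDA.taut ?_ ?_) hneg) himp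
    · have hC : (conjList l).isL := isL_conjList hlL
      exact isL_imp hC (isL_imp (isL_imp hφ hC) hφ)
    · intro v
      simp only [boolEval_imp, boolEval]
      cases boolEval v φ <;> cases boolEval v (conjList l) <;> rfl
  exact LDA.mp (LDA_dneg hφ) hdd

end Completeness

/-- **Soundness and completeness for CMABs.** A formula `φ ∈ L` is derivable in LDA
iff `φ` is valid for the class of consistent multi-agent belief models. -/
theorem soundness_completeness_cmab (Agt : Type) [Fintype Agt] (φ : Frm Agt)
    (hφ : φ.isL) :
    LDA φ ↔ ∀ (b : MABase Agt) (Cxt : Set (MABase Agt)), isCMAB b Cxt → msat Cxt b φ := by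
  constructor
  · intro h b Cxt hC
    exact LDA_sound h b Cxt hC
  · intro hval
    by_contra hnd
    obtain ⟨Γ, hΓ, hsub⟩ := lindenbaum (Δ := {Frm.neg φ})
      (by
        intro ψ h
        rw [Set.mem_singleton_iff] at h
        subst h
        exact hφ)
      (neg_consistent hφ hnd)
    set w0 : {Γ : Set (Frm Agt) // MCS Γ} := ⟨Γ, hΓ⟩
    have hCM := isCMAB_canonical hφ w0
    have hms := hval (cbase φ w0) (cCxt φ) hCM
    have hmem : φ ∈ Γ := (truth_lemma hφ (self_mem_subf φ) w0).1 hms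
    have hneg : Frm.neg φ ∈ Γ := hsub rfl
    exact (mcs_neg hΓ hφ).1 hneg hmem

end LDAPaper
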